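/- Let p be a prime, Γ ⊂ SL_d(𝔽_p) a subgroup, μ_0 a probability measure on Γ, and η a probability measure on 𝔽_p^d. Assume: (1) the only Γ-orbit in 𝔽_p^d of cardinality less than p is the singleton {0}; (2) ‖ℒ_0^θ(μ_0)‖ ≤ 2^{-5}; (3) for every x ∈ 𝔽_p^d, η(x) ≤ (40/41) ‖η‖_{L²}; and (4) ‖η̂‖_{L̂⁴} ≥ 19 p^{-1/4}. Then ‖ 𝒜̂^θ(μ_0) |η̂| ‖_{L̂⁴} ≤ 2^{-2^{-34}} ‖η̂‖_{L̂⁴}. -/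

import Mathlib

set_option synthInstance.maxHeartbeats 1000000
set_option maxHeartbeats 1000000
set_option linter.unusedSectionVars false

open MeasureTheory Matrix Filter Metric
open scoped BigOperators ENNReal Real

noncomputable section

instance : Fact ((0:ℝ) < 1) := ⟨one_pos⟩

abbrev SLZ (d : ℕ) := Matrix.SpecialLinearGroup (Fin d) ℤ

abbrev Torus (d : ℕ) := Fin d → AddCircle (1 : ℝ)

instance (d : ℕ) : MeasurableSpace (SLZ d) := ⊤

/-- Generic affine group `G ⋉ V` where `G` acts on `V` by additive automorphisms. -/
@[ext] structure AffOf (G V : Type*) where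
  lin : G
  trans : V

namespace AffOf

variable {G V : Type*} [Group G] [AddCommGroup V] [DistribMulAction G V]

instance : Mul (AffOf G V) := ⟨fun g h => ⟨g.lin * h.lin, g.lin • h.trans + g.trans⟩⟩
instance : One (AffOf G V) := ⟨⟨1, 0⟩⟩
instance : Inv (AffOf G V) := ⟨fun g => ⟨g.lin⁻¹, -(g.lin⁻¹ • g.trans)⟩⟩

@[simp] lemma mul_lin (g h : AffOf G V) : (g * h).lin = g.lin * h.lin := rfl
@[simp] lemma mul_trans (g h : AffOf G V) : (g * h).trans = g.lin • h.trans + g.trans := rfl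
@[simp] lemma one_lin : (1 : AffOf G V).lin = 1 := rfl
@[simp] lemma one_trans : (1 : AffOf G V).trans = 0 := rfl

instance : Group (AffOf G V) where
  mul_assoc a b c := by
    ext
    · exact mul_assoc _ _ _
    · show (a.lin * b.lin) • c.trans + (a.lin • b.trans + a.trans)
        = a.lin • (b.lin • c.trans + b.trans) + a.trans
      rw [mul_smul, smul_add, add_assoc]
  one_mul a := by
    ext
    · exact one_mul _
    · show (1 : G) • a.trans + 0 = a.trans
      simp
  mul_one a := by
    ext
    · exact mul_one _
    · show a.lin • (0 : V) + a.trans = a.trans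
      simp
  inv_mul_cancel a := by
    ext
    · exact inv_mul_cancel _
    · show a.lin⁻¹ • a.trans + -(a.lin⁻¹ • a.trans) = 0
      simp

/-- The projection onto the linear part, as a group homomorphism. -/
def linHom : AffOf G V →* G where
  toFun := AffOf.lin
  map_one' := rfl
  map_mul' _ _ := rfl

/-- The affine action of `AffOf G V` on `V`. -/
def aff (g : AffOf G V) (v : V) : V := g.lin • v + g.trans

/-- Equivalence with the product type (used for `Fintype`/measurable structures). -/
def equivProd : AffOf G V ≃ G × V where
  toFun g := (g.lin, g.trans)
  invFun p := ⟨p.1, p.2⟩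
  left_inv _ := rfl
  right_inv _ := rfl

end AffOf

instance {G V : Type*} [Fintype G] [Fintype V] : Fintype (AffOf G V) :=
  Fintype.ofEquiv _ (AffOf.equivProd (G := G) (V := V)).symm

instance {G V : Type*} [DecidableEq G] [DecidableEq V] : DecidableEq (AffOf G V) :=
  fun a b => decidable_of_iff (a.lin = b.lin ∧ a.trans = b.trans) AffOf.ext_iff.symm

instance {G V : Type*} [MeasurableSpace G] [MeasurableSpace V] :
    MeasurableSpace (AffOf G V) :=
  MeasurableSpace.comap AffOf.equivProd inferInstance

/-- The action of `SL_d(ℤ)` on the torus `𝕋^d`. -/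
instance torusAction (d : ℕ) : DistribMulAction (SLZ d) (Torus d) where
  smul γ x := fun i => ∑ j, (γ.1 i j) • x j
  one_smul x := by
    funext i
    show ∑ j, ((1 : SLZ d).1 i j) • x j = x i
    simp [Matrix.one_apply, ite_smul]
  mul_smul γ₁ γ₂ x := by
    funext i
    show ∑ j, ((γ₁ * γ₂).1 i j) • x j = ∑ k, (γ₁.1 i k) • ∑ j, (γ₂.1 k j) • x j
    simp only [Matrix.SpecialLinearGroup.coe_mul, Matrix.mul_apply, Finset.sum_smul,
      Finset.smul_sum, mul_smul]
    exact Finset.sum_comm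
  smul_zero γ := by
    funext i
    show ∑ j, (γ.1 i j) • (0 : AddCircle (1:ℝ)) = 0
    simp
  smul_add γ x y := by
    funext i
    show ∑ j, (γ.1 i j) • (x j + y j) = (∑ j, (γ.1 i j) • x j) + ∑ j, (γ.1 i j) • y j
    simp [smul_add, Finset.sum_add_distrib]

/-- `SL_d(ℤ) ⋉ 𝕋^d`. -/
abbrev Aff (d : ℕ) := AffOf (SLZ d) (Torus d)

/-- Cast an integer matrix in `SL_d(ℤ)` to a real matrix. -/
def toR {d : ℕ} (γ : SLZ d) : Matrix (Fin d) (Fin d) ℝ := γ.1.map (Int.cast : ℤ → ℝ)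

/-- Cast an integer matrix in `SL_d(ℤ)` to a rational matrix. -/
def toQ {d : ℕ} (γ : SLZ d) : Matrix (Fin d) (Fin d) ℚ := γ.1.map (Int.cast : ℤ → ℚ)

/-- Cast an integer matrix in `SL_d(ℤ)` to a complex matrix. -/
def toC {d : ℕ} (γ : SLZ d) : Matrix (Fin d) (Fin d) ℂ := γ.1.map (Int.cast : ℤ → ℂ)

lemma toR_one {d : ℕ} : toR (1 : SLZ d) = 1 := by
  rw [toR, Matrix.SpecialLinearGroup.coe_one, Matrix.map_one _ Int.cast_zero Int.cast_one]

lemma toR_mul {d : ℕ} (γ₁ γ₂ : SLZ d) : toR (γ₁ * γ₂) = toR γ₁ * toR γ₂ := by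
  simp only [toR, Matrix.SpecialLinearGroup.coe_mul]
  exact Matrix.map_mul (f := Int.castRingHom ℝ)

/-- The action of `SL_d(ℤ)` on `ℝ^d`. -/
instance realAction (d : ℕ) : DistribMulAction (SLZ d) (Fin d → ℝ) where
  smul γ v := (toR γ).mulVec v
  one_smul v := by show (toR 1).mulVec v = v; rw [toR_one, Matrix.one_mulVec]
  mul_smul γ₁ γ₂ v := by
    show (toR (γ₁ * γ₂)).mulVec v = (toR γ₁).mulVec ((toR γ₂).mulVec v)
    rw [toR_mul, Matrix.mulVec_mulVec]
  smul_zero γ := by show (toR γ).mulVec 0 = 0; rw [Matrix.mulVec_zero]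
  smul_add γ v w := by
    show (toR γ).mulVec (v + w) = (toR γ).mulVec v + (toR γ).mulVec w
    rw [Matrix.mulVec_add]

/-- `SL_d(ℤ) ⋉ ℝ^d`. -/
abbrev AffR (d : ℕ) := AffOf (SLZ d) (Fin d → ℝ)

/-- The action of `SL_d(𝔽_p)` on `𝔽_p^d`. -/
instance modpAction (p d : ℕ) :
    DistribMulAction (Matrix.SpecialLinearGroup (Fin d) (ZMod p)) (Fin d → ZMod p) where
  smul γ v := γ.1.mulVec v
  one_smul v := by
    show (1 : Matrix.SpecialLinearGroup (Fin d) (ZMod p)).1.mulVec v = v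
    simp [Matrix.SpecialLinearGroup.coe_one, Matrix.one_mulVec]
  mul_smul γ₁ γ₂ v := by
    show (γ₁ * γ₂).1.mulVec v = γ₁.1.mulVec (γ₂.1.mulVec v)
    rw [Matrix.SpecialLinearGroup.coe_mul, Matrix.mulVec_mulVec]
  smul_zero γ := Matrix.mulVec_zero _
  smul_add γ v w := Matrix.mulVec_add _ _ _

/-- `SL_d(𝔽_p) ⋉ 𝔽_p^d`. -/
abbrev AffP (p d : ℕ) := AffOf (Matrix.SpecialLinearGroup (Fin d) (ZMod p)) (Fin d → ZMod p)

instance (p d : ℕ) : MeasurableSpace (Matrix.SpecialLinearGroup (Fin d) (ZMod p)) := ⊤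
instance (p d : ℕ) : MeasurableSpace (Fin d → ZMod p) := ⊤

/-- The projection of `ℝ^d` onto the torus. -/
def projT {d : ℕ} (v : Fin d → ℝ) : Torus d := fun i => (v i : AddCircle (1:ℝ))

/-- The affine action of `SL_d(ℤ) ⋉ ℝ^d` on the torus. -/
def affRT {d : ℕ} (g : AffR d) (x : Torus d) : Torus d := g.lin • x + projT g.trans

/-- The support of a measure on a discrete-like space. -/
def msupport {α : Type*} [MeasurableSpace α] (μ : Measure α) : Set α := {a | μ {a} ≠ 0}

/-- Convolution of two measures on a group. -/
def mconv {G : Type*} [Mul G] [MeasurableSpace G] (μ ν : Measure G) : Measure G :=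
  (μ.prod ν).map fun p => p.1 * p.2

/-- Convolution power `μ^{*n}` (with `μ^{*0} = δ_1`). -/
def mconvPow {G : Type*} [Monoid G] [MeasurableSpace G] (μ : Measure G) : ℕ → Measure G
  | 0 => Measure.dirac 1
  | n + 1 => mconv μ (mconvPow μ n)

/-- Convolution of a measure on a set of transformations with a measure on a space. -/
def aconv {G X : Type*} [MeasurableSpace G] [MeasurableSpace X] (act : G → X → X)
    (μ : Measure G) (ν : Measure X) : Measure X :=
  (μ.prod ν).map fun p => act p.1 p.2

/-- `μ^{*n} * δ_x` for the affine random walk on the torus. -/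
def walk {d : ℕ} (μ : Measure (Aff d)) (x : Torus d) (n : ℕ) : Measure (Torus d) :=
  aconv AffOf.aff (mconvPow μ n) (Measure.dirac x)

/-- The Fourier coefficient `ν̂(a) = ∫ e^{2πi⟨a,x⟩} dν(x)` of a measure on the torus. -/
def fcoef {d : ℕ} (ν : Measure (Torus d)) (a : Fin d → ℤ) : ℂ :=
  ∫ x, (∏ i, fourier (a i) (x i)) ∂ν

/-- A sup-type norm of an element of `SL_d(ℤ)`. -/
def matNorm {d : ℕ} (g : SLZ d) : ℝ := ‖fun ij : Fin d × Fin d => (g.1 ij.1 ij.2 : ℝ)‖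

/-- `hasLyap μ₀ l` : the top Lyapunov exponent of `μ₀` exists and equals `l`. -/
def hasLyap {d : ℕ} (μ₀ : Measure (SLZ d)) (l : ℝ) : Prop :=
  Tendsto (fun n : ℕ => (n : ℝ)⁻¹ * ∫ g, Real.log (matNorm g) ∂(mconvPow μ₀ n)) atTop (nhds l)

/-- Strong irreducibility of the action of a set of matrices on `ℝ^d`: no nontrivial finite
union of proper nonzero subspaces is invariant. -/
def SIrredR {d : ℕ} (S : Set (SLZ d)) : Prop :=
  ¬ ∃ F : Finset (Submodule ℝ (Fin d → ℝ)), F.Nonempty ∧ (∀ W ∈ F, W ≠ ⊥ ∧ W ≠ ⊤) ∧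
      ∀ γ ∈ S, ∀ W ∈ F, W.map (Matrix.toLin' (toR γ)) ∈ F

/-- Strong irreducibility of the action of a set of matrices on `ℚ^d`. -/
def SIrredQ {d : ℕ} (S : Set (SLZ d)) : Prop :=
  ¬ ∃ F : Finset (Submodule ℚ (Fin d → ℚ)), F.Nonempty ∧ (∀ W ∈ F, W ≠ ⊥ ∧ W ≠ ⊤) ∧
      ∀ γ ∈ S, ∀ W ∈ F, W.map (Matrix.toLin' (toQ γ)) ∈ F

/-- Irreducibility of the action of a set of matrices on `ℚ^d`. -/
def IrredQ {d : ℕ} (S : Set (SLZ d)) : Prop :=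
  ¬ ∃ W : Submodule ℚ (Fin d → ℚ), W ≠ ⊥ ∧ W ≠ ⊤ ∧
      ∀ γ ∈ S, W.map (Matrix.toLin' (toQ γ)) = W

open scoped Classical in
/-- A proximal element : a simple dominant eigenvalue (over `ℂ`). -/
def IsProximal {d : ℕ} (γ : SLZ d) : Prop :=
  ∃ χ : ℂ, (Matrix.charpoly (toC γ)).roots.count χ = 1 ∧
    ∀ χ' ∈ (Matrix.charpoly (toC γ)).roots, χ' ≠ χ → ‖χ'‖ < ‖χ‖

/-- The Zariski topology on `d × d` complex matrices. -/
def zTop (d : ℕ) : TopologicalSpace (Matrix (Fin d) (Fin d) ℂ) :=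
  TopologicalSpace.generateFrom
    { U | ∃ f : MvPolynomial (Fin d × Fin d) ℂ,
        U = { M | MvPolynomial.eval (fun ij => M ij.1 ij.2) f ≠ 0 } }

/-- Zariski closure of a set of complex matrices. -/
def zclosure {d : ℕ} (S : Set (Matrix (Fin d) (Fin d) ℂ)) : Set (Matrix (Fin d) (Fin d) ℂ) :=
  @closure _ (zTop d) S

/-- The Zariski closure of (the complexification of) `S ⊆ SL_d(ℤ)` is connected. -/
def ZClosureConnected {d : ℕ} (S : Set (SLZ d)) : Prop :=
  @IsConnected _ (zTop d) (zclosure (toC '' S))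

/-- The Zariski closure of `S ⊆ SL_d(ℤ)` is semisimple: every Zariski closed and connected
subgroup which is normalized by the closure and solvable is trivial. -/
def ZClosureSemisimple {d : ℕ} (S : Set (SLZ d)) : Prop :=
  ∀ H : Subgroup (Matrix.GeneralLinearGroup (Fin d) ℂ),
    ((fun g : Matrix.GeneralLinearGroup (Fin d) ℂ => (g : Matrix (Fin d) (Fin d) ℂ)) ''
        (H : Set (Matrix.GeneralLinearGroup (Fin d) ℂ)) ⊆ zclosure (toC '' S)) →
    @IsClosed _ (zTop d) ((fun g : Matrix.GeneralLinearGroup (Fin d) ℂ =>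
        (g : Matrix (Fin d) (Fin d) ℂ)) '' (H : Set (Matrix.GeneralLinearGroup (Fin d) ℂ))) →
    @IsConnected _ (zTop d) ((fun g : Matrix.GeneralLinearGroup (Fin d) ℂ =>
        (g : Matrix (Fin d) (Fin d) ℂ)) '' (H : Set (Matrix.GeneralLinearGroup (Fin d) ℂ))) →
    (∀ g : Matrix.GeneralLinearGroup (Fin d) ℂ,
        (g : Matrix (Fin d) (Fin d) ℂ) ∈ zclosure (toC '' S) →
        ∀ h ∈ H, g * h * g⁻¹ ∈ H) →
    IsSolvable H → H = ⊥

/-- The set `𝒫_Q` of data `(u, x)` giving a trapped orbit of height at most `Q`. -/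
def PQ {d : ℕ} {Ω : Type*} (γ : Ω → SLZ d) (Q : ℝ) : Set ((Ω → Torus d) × Torus d) :=
  { p | ∃ q : ℕ, 1 ≤ q ∧ (q : ℝ) ≤ Q ∧
      ∀ ω : Ω, ∀ i : Fin d,
        q • ((AffOf.aff (⟨γ ω, p.1 ω⟩ : Aff d) p.2 - p.2) i) = 0 }

/-- `α`-energy of a measure on the torus. -/
def energy {d : ℕ} (α : ℝ) (ν : Measure (Torus d)) : ℝ≥0∞ :=
  ∫⁻ q in {q : Torus d × Torus d | q.1 ≠ q.2},
    ENNReal.ofReal ((dist q.1 q.2) ^ (-α)) ∂(ν.prod ν)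

/-- A set is `r`-separated. -/
def IsSep {X : Type*} [PseudoMetricSpace X] (r : ℝ) (S : Set X) : Prop :=
  ∀ x ∈ S, ∀ y ∈ S, x ≠ y → r ≤ dist x y

/-- Finite exponential moment. -/
def expMoment {d : ℕ} (μ₀ : Measure (SLZ d)) : Prop :=
  ∃ α > (0:ℝ), ∫⁻ g, ENNReal.ofReal ((matNorm g) ^ α) ∂μ₀ < ⊤


/-- Reduction modulo `p` of an element of `SL_d(ℤ)`. -/
def redP (p : ℕ) {d : ℕ} (γ : SLZ d) : Matrix.SpecialLinearGroup (Fin d) (ZMod p) :=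
  Matrix.SpecialLinearGroup.map (Int.castRingHom (ZMod p)) γ

/-- The random word `g(ω₁) g(ω₂) ⋯ g(ωₙ)`. -/
def word {G : Type*} [Monoid G] {Ω : Type*} (g : Ω → G) {n : ℕ} (ωs : Fin n → Ω) : G :=
  (List.ofFn fun i => g (ωs i)).prod

/-- The orbit of `x` under a set of elements of `SL_d(𝔽_p)`. -/
def orbitSet {p d : ℕ} (Γs : Set (Matrix.SpecialLinearGroup (Fin d) (ZMod p)))
    (x : Fin d → ZMod p) : Set (Fin d → ZMod p) :=
  (fun γ : Matrix.SpecialLinearGroup (Fin d) (ZMod p) => γ.1.mulVec x) '' Γs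

/-- The Dirac function at `x`. -/
def deltaF {p d : ℕ} (x : Fin d → ZMod p) : (Fin d → ZMod p) → ℝ :=
  fun y => if y = x then 1 else 0

/-- The Koopman operator `𝒜(μ)` applied to a function: `(𝒜(μ)f)(y) = ∑_g μ(g) f(g⁻¹y)`. -/
def pushStep {p d : ℕ} [NeZero p] (μ : AffP p d → ℝ) (f : (Fin d → ZMod p) → ℝ) :
    (Fin d → ZMod p) → ℝ :=
  fun y => ∑ g : AffP p d, μ g * f (AffOf.aff g⁻¹ y)

/-- `L²` norm of a real function on a finite set (counting measure). -/
def l2R {X : Type*} [Fintype X] (f : X → ℝ) : ℝ := Real.sqrt (∑ x, f x ^ 2)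

/-- `L²` norm of a complex function on a finite set (counting measure). -/
def l2C {X : Type*} [Fintype X] (f : X → ℂ) : ℝ := Real.sqrt (∑ x, ‖f x‖ ^ 2)

/-- The `L̂⁴` norm `(p^{-d} ∑_a |φ(a)|⁴)^{1/4}` on the dual of `𝔽_p^d`. -/
def hatL4 {p d : ℕ} [NeZero p] (φ : (Fin d → ZMod p) → ℝ) : ℝ :=
  ((p : ℝ) ^ (-(d : ℤ)) * ∑ a, |φ a| ^ 4) ^ ((1 : ℝ) / 4)

/-- The discrete Fourier transform `f̂(a) = ∑_x e(⟨a,x⟩) f(x)` on `𝔽_p^d`. -/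
def fhat {p d : ℕ} [NeZero p] (f : (Fin d → ZMod p) → ℝ) (a : Fin d → ZMod p) : ℂ :=
  ∑ x, Complex.exp (2 * Real.pi * Complex.I * (((∑ i, a i * x i : ZMod p).val : ℂ)) / (p : ℂ)) * f x

noncomputable instance {p d : ℕ} [NeZero p]
    (Γ : Subgroup (Matrix.SpecialLinearGroup (Fin d) (ZMod p))) : Fintype ↥Γ :=
  Fintype.ofFinite _

/-- The projection of a probability function on `SL_d(𝔽_p) ⋉ 𝔽_p^d` to `Γ`. -/
def projToGamma {p d : ℕ} [NeZero p] (Γ : Subgroup (Matrix.SpecialLinearGroup (Fin d) (ZMod p)))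
    (μ : AffP p d → ℝ) (z : ↥Γ) : ℝ :=
  ∑ v : Fin d → ZMod p, μ ⟨(z : Matrix.SpecialLinearGroup (Fin d) (ZMod p)), v⟩

/-- Spectral gap condition `‖ℒ⁰_θ(μ₀)‖ ≤ c` for the left regular representation of `Γ`
restricted to mean-zero functions. -/
def lregGap {p d : ℕ} [NeZero p] (Γ : Subgroup (Matrix.SpecialLinearGroup (Fin d) (ZMod p)))
    (μ₀ : ↥Γ → ℝ) (c : ℝ) : Prop :=
  ∀ f : ↥Γ → ℂ, (∑ z : ↥Γ, f z) = 0 →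
    l2C (fun z : ↥Γ => ∑ w : ↥Γ, (μ₀ w : ℂ) * f (w⁻¹ * z)) ≤ c * l2C f

end
open Complex Finset

namespace L4Aux

variable {p : ℕ} [NeZero p]

noncomputable def ec (p : ℕ) (t : ZMod p) : ℂ :=
  Complex.exp (((2 * Real.pi * t.val / p : ℝ) : ℂ) * Complex.I)

lemma ec_eq (p : ℕ) (t : ZMod p) :
    Complex.exp (2 * Real.pi * Complex.I * (t.val : ℂ) / (p : ℂ)) = ec p t := by
  rw [ec]; congr 1
  rw [Complex.ofReal_div, Complex.ofReal_mul, Complex.ofReal_mul]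
  push_cast
  ring

lemma ec_zero : ec p (0 : ZMod p) = 1 := by
  simp [ec]

lemma ec_add (s t : ZMod p) : ec p (s + t) = ec p s * ec p t := by
  have hp : (p:ℝ) ≠ 0 := Nat.cast_ne_zero.mpr (NeZero.ne p)
  set k : ℤ := (((s.val + t.val) / p : ℕ) : ℤ) with hk
  have hnat : s.val + t.val = (s + t).val + p * ((s.val + t.val) / p) := by
    rw [ZMod.val_add]; exact (Nat.mod_add_div _ _).symm
  set sv := (s.val : ℝ) with hsv
  set tv := (t.val : ℝ) with htv
  set cv := ((s+t).val : ℝ) with hcv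
  have hcast : sv + tv = cv + (p : ℝ) * (k : ℝ) := by
    rw [hsv, htv, hcv, hk]; exact_mod_cast congrArg (Nat.cast : ℕ → ℝ) hnat
  have hreal : 2 * Real.pi * sv / p + 2 * Real.pi * tv / p
      = 2 * Real.pi * cv / p + (k:ℝ) * (2 * Real.pi) := by
    rw [← add_div, div_add' _ _ _ hp]
    congr 1
    linear_combination (2 * Real.pi) * hcast
  rw [ec, ec, ec, ← Complex.exp_add, ← add_mul, ← Complex.ofReal_add, hreal,
    Complex.ofReal_add, add_mul, Complex.exp_add]
  have hone : Complex.exp ((((k:ℝ) * (2*Real.pi) : ℝ):ℂ) * Complex.I) = 1 := by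
    have h2 : (((k:ℝ) * (2*Real.pi) : ℝ):ℂ) * Complex.I = (k:ℂ) * (2*(Real.pi:ℂ)*Complex.I) := by
      push_cast; ring
    rw [h2, Complex.exp_int_mul_two_pi_mul_I]
  rw [hone, mul_one]

lemma ec_abs (t : ZMod p) : ‖ec p t‖ = 1 := by
  rw [ec, Complex.norm_exp_ofReal_mul_I]

lemma ec_neg (t : ZMod p) : ec p (-t) = (ec p t)⁻¹ := by
  have h : ec p t * ec p (-t) = 1 := by rw [← ec_add]; simp [ec_zero]
  exact (inv_eq_of_mul_eq_one_right h).symm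

lemma ec_conj (t : ZMod p) : (starRingEnd ℂ) (ec p t) = ec p (-t) := by
  have hn : Complex.normSq (ec p t) = 1 := by
    rw [← Complex.sq_norm, ec_abs]; norm_num
  rw [ec_neg, Complex.inv_def, hn]
  simp

lemma ec_ne_one {t : ZMod p} (ht : t ≠ 0) : ec p t ≠ 1 := by
  rw [ec, Ne, Complex.exp_eq_one_iff]
  rintro ⟨n, hn⟩
  have hI : (Complex.I : ℂ) ≠ 0 := Complex.I_ne_zero
  have h2 : ((2 * Real.pi * t.val / p : ℝ) : ℂ) = ((n * (2 * Real.pi) : ℝ) : ℂ) := by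
    have h' : ((n : ℂ) * (2 * Real.pi)) * Complex.I = (n:ℂ) * (2 * ↑Real.pi * Complex.I) := by ring
    rw [← h'] at hn
    have := mul_right_cancel₀ hI hn
    rw [this]; push_cast; ring
  have h3 : (2 * Real.pi * t.val / p : ℝ) = (n : ℝ) * (2 * Real.pi) := by exact_mod_cast h2
  have hp0 : (0:ℝ) < p := by exact_mod_cast Nat.pos_of_ne_zero (NeZero.ne p)
  have hv0 : 0 < t.val := Nat.pos_of_ne_zero (fun h => ht (by rwa [← ZMod.val_eq_zero]))
  have hv0' : (0:ℝ) < (t.val:ℝ) := by exact_mod_cast hv0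
  have hvp : (t.val : ℝ) < p := by exact_mod_cast ZMod.val_lt t
  have hπ : (0:ℝ) < Real.pi := Real.pi_pos
  have hθ0 : (0:ℝ) < 2 * Real.pi * t.val / p := by positivity
  have hθ2 : 2 * Real.pi * t.val / p < 2 * Real.pi := by
    rw [div_lt_iff₀ hp0]
    nlinarith
  rw [h3] at hθ0 hθ2
  have hn0 : (0:ℝ) < (n:ℝ) := by nlinarith
  have hn1 : (n:ℝ) < 1 := by nlinarith
  have g1 : (0:ℤ) < n := by exact_mod_cast hn0
  have g2 : (n:ℤ) < 1 := by exact_mod_cast hn1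
  omega



variable {d : ℕ}

noncomputable def dotp (a x : Fin d → ZMod p) : ZMod p := ∑ i, a i * x i

noncomputable def FC (φ : (Fin d → ZMod p) → ℝ) (a : Fin d → ZMod p) : ℂ :=
  ∑ x, ec p (dotp a x) * (φ x : ℂ)

lemma dotp_zero_right (a : Fin d → ZMod p) : dotp a 0 = 0 := by
  simp [dotp]

lemma dotp_add_left (a b x : Fin d → ZMod p) : dotp (a + b) x = dotp a x + dotp b x := by
  simp [dotp, add_mul, Finset.sum_add_distrib]

lemma dotp_sub_right (a x y : Fin d → ZMod p) : dotp a (x - y) = dotp a x - dotp a y := by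
  simp [dotp, mul_sub, Finset.sum_sub_distrib]

lemma dotp_single (i₀ : Fin d) (z : Fin d → ZMod p) :
    dotp (Pi.single i₀ 1) z = z i₀ := by
  rw [dotp, Finset.sum_eq_single i₀]
  · simp
  · intro b _ hb; simp [Pi.single_apply, hb]
  · intro h; exact absurd (Finset.mem_univ i₀) h

lemma dotp_mulVec (A : Matrix (Fin d) (Fin d) (ZMod p)) (a x : Fin d → ZMod p) :
    dotp (A.transpose.mulVec a) x = dotp a (A.mulVec x) := by
  simp only [dotp, Matrix.mulVec, dotProduct, Matrix.transpose_apply,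
    Finset.sum_mul, Finset.mul_sum]
  rw [Finset.sum_comm]
  apply Finset.sum_congr rfl; intro i _
  apply Finset.sum_congr rfl; intro j _
  ring

lemma sum_ec_dotp (z : Fin d → ZMod p) :
    ∑ a : Fin d → ZMod p, ec p (dotp a z) = if z = 0 then ((p^d : ℕ) : ℂ) else 0 := by
  by_cases hz : z = 0
  · simp only [hz, if_pos, dotp_zero_right, ec_zero, Finset.sum_const, Finset.card_univ]
    rw [Fintype.card_fun]
    simp [ZMod.card]
  · rw [if_neg hz]
    obtain ⟨i₀, hi₀⟩ : ∃ i, z i ≠ 0 := by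
      by_contra hc
      push_neg at hc
      exact hz (funext hc)
    set u : Fin d → ZMod p := Pi.single i₀ 1 with hu
    have hshift : ∑ a : Fin d → ZMod p, ec p (dotp a z)
        = ∑ a : Fin d → ZMod p, ec p (dotp (a + u) z) :=
      (Fintype.sum_equiv (Equiv.addRight u) _ _ (fun a => rfl)).symm
    have : ∑ a : Fin d → ZMod p, ec p (dotp (a + u) z)
        = (∑ a : Fin d → ZMod p, ec p (dotp a z)) * ec p (z i₀) := by
      rw [Finset.sum_mul]
      congr 1; ext a
      rw [dotp_add_left, ec_add, hu, dotp_single]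
    rw [this] at hshift
    have hne : ec p (z i₀) - 1 ≠ 0 := sub_ne_zero.mpr (ec_ne_one hi₀)
    have h0 : (∑ a : Fin d → ZMod p, ec p (dotp a z)) * (ec p (z i₀) - 1) = 0 := by
      linear_combination -hshift
    rcases mul_eq_zero.mp h0 with h | h
    · exact h
    · exact absurd h hne

lemma parseval (φ : (Fin d → ZMod p) → ℝ) :
    ∑ a : Fin d → ZMod p, ‖FC φ a‖ ^ 2 = (p^d : ℕ) * ∑ x, φ x ^ 2 := by
  have hC : ∑ a : Fin d → ZMod p, FC φ a * (starRingEnd ℂ) (FC φ a)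
      = ((p^d : ℕ) : ℂ) * ∑ x, ((φ x : ℂ)) ^ 2 := by
    have expand : ∀ a : Fin d → ZMod p, FC φ a * (starRingEnd ℂ) (FC φ a)
        = ∑ x, ∑ y, ec p (dotp a (x - y)) * (φ x : ℂ) * (φ y : ℂ) := by
      intro a
      rw [FC, map_sum, Finset.sum_mul_sum]
      congr 1; ext x
      congr 1; ext y
      rw [_root_.map_mul, ec_conj, Complex.conj_ofReal, dotp_sub_right, sub_eq_add_neg, ec_add]
      ring
    calc ∑ a : Fin d → ZMod p, FC φ a * (starRingEnd ℂ) (FC φ a)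
        = ∑ a : Fin d → ZMod p, ∑ x, ∑ y, ec p (dotp a (x - y)) * (φ x : ℂ) * (φ y : ℂ) := by
          exact Finset.sum_congr rfl (fun a _ => expand a)
      _ = ∑ x, ∑ y, (∑ a : Fin d → ZMod p, ec p (dotp a (x - y))) * ((φ x : ℂ) * (φ y : ℂ)) := by
          rw [Finset.sum_comm]
          congr 1; ext x
          rw [Finset.sum_comm]
          congr 1; ext y
          rw [Finset.sum_mul]
          congr 1; ext a
          ring
      _ = ∑ x, ∑ y, (if x = y then ((p^d : ℕ):ℂ) else 0) * ((φ x : ℂ) * (φ y : ℂ)) := by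
          congr 1; ext x; congr 1; ext y
          rw [sum_ec_dotp]
          congr 1
          simp [sub_eq_zero]
      _ = ((p^d : ℕ) : ℂ) * ∑ x, ((φ x : ℂ)) ^ 2 := by
          rw [Finset.mul_sum]
          apply Finset.sum_congr rfl; intro x _
          rw [Finset.sum_eq_single x]
          · simp [pow_two]
          · intro y _ hyx
            rw [if_neg (fun h => hyx h.symm), zero_mul]
          · intro h; exact absurd (Finset.mem_univ x) h
  have key : ∑ a : (Fin d → ZMod p), ((‖FC φ a‖ ^ 2 : ℝ) : ℂ)
      = ∑ a : (Fin d → ZMod p), FC φ a * (starRingEnd ℂ) (FC φ a) := by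
    apply Finset.sum_congr rfl
    intro a _
    rw [Complex.mul_conj, Complex.normSq_eq_norm_sq]
  have final : ((∑ a, ‖FC φ a‖ ^ 2 : ℝ) : ℂ)
      = (((p^d : ℕ) * ∑ x, φ x ^ 2 : ℝ) : ℂ) := by
    rw [Complex.ofReal_sum, key, hC]
    push_cast
    ring
  exact_mod_cast final

noncomputable def corr (η : (Fin d → ZMod p) → ℝ) (z : Fin d → ZMod p) : ℝ :=
  ∑ y, η (z + y) * η y

lemma conj_FC (φ : (Fin d → ZMod p) → ℝ) (a : Fin d → ZMod p) :
    (starRingEnd ℂ) (FC φ a) = ∑ y, ec p (-(dotp a y)) * (φ y : ℂ) := by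
  rw [FC, map_sum]
  apply Finset.sum_congr rfl; intro y _
  rw [_root_.map_mul, ec_conj, Complex.conj_ofReal]

lemma FC_corr (η : (Fin d → ZMod p) → ℝ) (a : Fin d → ZMod p) :
    FC (corr η) a = ((‖FC η a‖ ^ 2 : ℝ) : ℂ) := by
  have main : FC (corr η) a = FC η a * (starRingEnd ℂ) (FC η a) := by
    calc FC (corr η) a
        = ∑ z, ec p (dotp a z) * ((corr η z : ℝ) : ℂ) := rfl
      _ = ∑ z, ∑ y, ec p (dotp a z) * (η (z + y) : ℂ) * (η y : ℂ) := by
          apply Finset.sum_congr rfl; intro z _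
          rw [corr, Complex.ofReal_sum, Finset.mul_sum]
          apply Finset.sum_congr rfl; intro y _
          push_cast; ring
      _ = ∑ y, ∑ z, ec p (dotp a z) * (η (z + y) : ℂ) * (η y : ℂ) := Finset.sum_comm
      _ = ∑ y, ∑ x, ec p (dotp a (x - y)) * (η x : ℂ) * (η y : ℂ) := by
          apply Finset.sum_congr rfl; intro y _
          exact (Fintype.sum_equiv (Equiv.subRight y) _ _ (fun x => by
            simp only [Equiv.subRight_apply, sub_add_cancel])).symm
      _ = ∑ y, ∑ x, (ec p (dotp a x) * (η x : ℂ)) * (ec p (-(dotp a y)) * (η y : ℂ)) := by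
          apply Finset.sum_congr rfl; intro y _
          apply Finset.sum_congr rfl; intro x _
          rw [dotp_sub_right, sub_eq_add_neg, ec_add]
          ring
      _ = FC η a * (starRingEnd ℂ) (FC η a) := by
          rw [conj_FC, FC, Finset.sum_mul_sum]
          exact Finset.sum_comm
  rw [main, Complex.mul_conj, Complex.normSq_eq_norm_sq]

lemma mulVec_inv_cancel (w : Matrix.SpecialLinearGroup (Fin d) (ZMod p))
    (x : Fin d → ZMod p) : (w⁻¹).1.mulVec (w.1.mulVec x) = x := by
  rw [Matrix.mulVec_mulVec, ← Matrix.SpecialLinearGroup.coe_mul, inv_mul_cancel,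
    Matrix.SpecialLinearGroup.coe_one, Matrix.one_mulVec]

noncomputable def slEquiv (w : Matrix.SpecialLinearGroup (Fin d) (ZMod p)) :
    (Fin d → ZMod p) ≃ (Fin d → ZMod p) where
  toFun x := w.1.mulVec x
  invFun x := (w⁻¹).1.mulVec x
  left_inv x := mulVec_inv_cancel w x
  right_inv x := by
    have := mulVec_inv_cancel w⁻¹ x
    rwa [inv_inv] at this

lemma FC_transpose (w : Matrix.SpecialLinearGroup (Fin d) (ZMod p))
    (φ : (Fin d → ZMod p) → ℝ) (a : Fin d → ZMod p) :
    FC φ (w.1.transpose.mulVec a) = FC (fun x => φ ((w⁻¹).1.mulVec x)) a := by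
  rw [FC, FC]
  calc ∑ x, ec p (dotp (w.1.transpose.mulVec a) x) * (φ x : ℂ)
      = ∑ x, ec p (dotp a ((slEquiv w) x)) * ((φ ((w⁻¹).1.mulVec ((slEquiv w) x)) : ℝ) : ℂ) := by
        apply Finset.sum_congr rfl; intro x _
        simp only [slEquiv, Equiv.coe_fn_mk]
        rw [dotp_mulVec, mulVec_inv_cancel]
    _ = ∑ y, ec p (dotp a y) * ((φ ((w⁻¹).1.mulVec y) : ℝ) : ℂ) :=
        Fintype.sum_equiv (slEquiv w) _ _ (fun x => rfl)




section OrbitPart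

variable {p d : ℕ} [NeZero p] (Γ : Subgroup (Matrix.SpecialLinearGroup (Fin d) (ZMod p)))

local notation "SL" => Matrix.SpecialLinearGroup (Fin d) (ZMod p)
local notation "V" => (Fin d → ZMod p)

noncomputable def Orb (x : Fin d → ZMod p) : Finset (Fin d → ZMod p) :=
  Finset.image (fun g : ↥Γ => (g : SL).1.mulVec x) Finset.univ

lemma mem_Orb_iff {x y : Fin d → ZMod p} :
    y ∈ Orb Γ x ↔ ∃ g : ↥Γ, (g : SL).1.mulVec x = y := by
  simp [Orb]

lemma self_mem_Orb (x : Fin d → ZMod p) : x ∈ Orb Γ x := by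
  rw [mem_Orb_iff]
  exact ⟨1, by simp [Matrix.one_mulVec]⟩

lemma smul_mem_Orb (g : ↥Γ) (x : Fin d → ZMod p) : (g : SL).1.mulVec x ∈ Orb Γ x := by
  rw [mem_Orb_iff]; exact ⟨g, rfl⟩

lemma Orb_subset_of_mem {x y : Fin d → ZMod p} (h : y ∈ Orb Γ x) : Orb Γ y ⊆ Orb Γ x := by
  rw [mem_Orb_iff] at h
  obtain ⟨g, rfl⟩ := h
  intro z hz
  rw [mem_Orb_iff] at hz ⊢
  obtain ⟨g', rfl⟩ := hz
  refine ⟨g' * g, ?_⟩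
  rw [Matrix.mulVec_mulVec]
  congr 1

lemma Orb_eq_of_mem {x y : Fin d → ZMod p} (h : y ∈ Orb Γ x) : Orb Γ y = Orb Γ x := by
  apply Finset.Subset.antisymm (Orb_subset_of_mem Γ h)
  apply Orb_subset_of_mem
  rw [mem_Orb_iff] at h ⊢
  obtain ⟨g, rfl⟩ := h
  refine ⟨g⁻¹, ?_⟩
  rw [Matrix.mulVec_mulVec]
  have hc : ((g⁻¹ : ↥Γ) : SL).1 * ((g : ↥Γ) : SL).1 = (1 : Matrix (Fin d) (Fin d) (ZMod p)) := by
    rw [← Matrix.SpecialLinearGroup.coe_mul]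
    norm_cast
    rw [inv_mul_cancel]
    rfl
  rw [hc, Matrix.one_mulVec]

lemma mem_Orb_symm {x y : Fin d → ZMod p} (h : y ∈ Orb Γ x) : x ∈ Orb Γ y := by
  rw [Orb_eq_of_mem Γ h]; exact self_mem_Orb Γ x

lemma Orb_card_pos (x : Fin d → ZMod p) : 0 < (Orb Γ x).card :=
  Finset.card_pos.mpr ⟨x, self_mem_Orb Γ x⟩

lemma Orb_zero : Orb Γ (0 : Fin d → ZMod p) = {0} := by
  apply Finset.Subset.antisymm
  · intro y hy
    rw [mem_Orb_iff] at hy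
    obtain ⟨g, rfl⟩ := hy
    simp [Matrix.mulVec_zero]
  · intro y hy
    simp only [Finset.mem_singleton] at hy
    subst hy
    exact self_mem_Orb Γ 0

noncomputable def orbs : Finset (Finset (Fin d → ZMod p)) := Finset.image (Orb Γ) Finset.univ

lemma filter_Orb_eq {x₀ : Fin d → ZMod p} :
    Finset.filter (fun y => Orb Γ y = Orb Γ x₀) Finset.univ = Orb Γ x₀ := by
  ext y
  simp only [Finset.mem_filter, Finset.mem_univ, true_and]
  constructor
  · intro h; rw [← h]; exact self_mem_Orb Γ y
  · intro h; exact Orb_eq_of_mem Γ h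

lemma sum_orbs (f : (Fin d → ZMod p) → ℝ) :
    ∑ O ∈ orbs Γ, ∑ y ∈ O, f y = ∑ y, f y := by
  have h := Finset.sum_fiberwise_of_maps_to (s := (Finset.univ : Finset (Fin d → ZMod p)))
    (t := orbs Γ) (g := Orb Γ) (fun y _ => Finset.mem_image_of_mem _ (Finset.mem_univ y)) f
  rw [← h]
  apply Finset.sum_congr rfl
  intro O hO
  obtain ⟨x₀, -, rfl⟩ := Finset.mem_image.mp hO
  rw [filter_Orb_eq Γ]

end OrbitPart


section OpPart

open Finset

variable {p d : ℕ} [NeZero p] (Γ : Subgroup (Matrix.SpecialLinearGroup (Fin d) (ZMod p)))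
  (μ₀ : ↥Γ → ℝ)

local notation "SL" => Matrix.SpecialLinearGroup (Fin d) (ZMod p)

noncomputable def act (g : ↥Γ) (x : Fin d → ZMod p) : Fin d → ZMod p := (g : SL).1.mulVec x

lemma act_mul (g h : ↥Γ) (x : Fin d → ZMod p) : act Γ (g * h) x = act Γ g (act Γ h x) := by
  rw [act, act, act, Matrix.mulVec_mulVec]
  congr 1

lemma act_one (x : Fin d → ZMod p) : act Γ 1 x = x := by
  rw [act]
  norm_cast
  rw [Matrix.SpecialLinearGroup.coe_one, Matrix.one_mulVec]

lemma act_inv_cancel (g : ↥Γ) (x : Fin d → ZMod p) : act Γ g⁻¹ (act Γ g x) = x := by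
  rw [← act_mul, inv_mul_cancel, act_one]

lemma act_mem_Orb (g : ↥Γ) (x : Fin d → ZMod p) : act Γ g x ∈ Orb Γ x :=
  smul_mem_Orb Γ g x

lemma mem_Orb_iff_act {x y : Fin d → ZMod p} :
    y ∈ Orb Γ x ↔ ∃ g : ↥Γ, act Γ g x = y := mem_Orb_iff Γ

noncomputable def stabN (x₀ : Fin d → ZMod p) : ℕ :=
  (Finset.univ.filter (fun g : ↥Γ => act Γ g x₀ = x₀)).card

lemma stabN_pos (x₀ : Fin d → ZMod p) : 0 < stabN Γ x₀ :=
  Finset.card_pos.mpr ⟨1, Finset.mem_filter.mpr ⟨Finset.mem_univ _, act_one Γ x₀⟩⟩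

lemma card_fiber {x₀ y : Fin d → ZMod p} (hy : y ∈ Orb Γ x₀) :
    (Finset.univ.filter (fun g : ↥Γ => act Γ g x₀ = y)).card = stabN Γ x₀ := by
  rw [mem_Orb_iff_act] at hy
  obtain ⟨gy, hgy⟩ := hy
  rw [stabN]
  apply Finset.card_nbij' (fun g => gy⁻¹ * g) (fun g => gy * g)
  · intro g hg
    rw [Finset.mem_coe, Finset.mem_filter] at hg ⊢
    refine ⟨Finset.mem_univ _, ?_⟩
    rw [act_mul, hg.2, ← hgy, act_inv_cancel]
  · intro g hg
    rw [Finset.mem_coe, Finset.mem_filter] at hg ⊢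
    refine ⟨Finset.mem_univ _, ?_⟩
    rw [act_mul, hg.2, hgy]
  · intro g _; group
  · intro g _; group

lemma sum_gamma (x₀ : Fin d → ZMod p) (u : (Fin d → ZMod p) → ℝ) :
    ∑ g : ↥Γ, u (act Γ g x₀) = (stabN Γ x₀ : ℝ) * ∑ y ∈ Orb Γ x₀, u y := by
  have h := Finset.sum_fiberwise_of_maps_to (s := (Finset.univ : Finset ↥Γ))
    (t := Orb Γ x₀) (g := fun g : ↥Γ => act Γ g x₀)
    (fun g _ => act_mem_Orb Γ g x₀) (fun g => u (act Γ g x₀))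
  rw [← h, Finset.mul_sum]
  apply Finset.sum_congr rfl
  intro y hy
  have : ∀ g ∈ Finset.univ.filter (fun g : ↥Γ => act Γ g x₀ = y), u (act Γ g x₀) = u y := by
    intro g hg
    rw [(Finset.mem_filter.mp hg).2]
  rw [Finset.sum_congr rfl this, Finset.sum_const, card_fiber Γ hy, nsmul_eq_mul]

/-- The Koopman-type averaging operator on functions on `V`. -/
noncomputable def Kop (φ : (Fin d → ZMod p) → ℝ) (x : Fin d → ZMod p) : ℝ :=
  ∑ w : ↥Γ, μ₀ w * φ (act Γ w⁻¹ x)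

/-- Orbit-average projection. -/
noncomputable def Pavg (φ : (Fin d → ZMod p) → ℝ) (x : Fin d → ZMod p) : ℝ :=
  (∑ y ∈ Orb Γ x, φ y) / (Orb Γ x).card

lemma Pavg_eq_of_mem {x y : Fin d → ZMod p} (φ : (Fin d → ZMod p) → ℝ) (h : y ∈ Orb Γ x) :
    Pavg Γ φ y = Pavg Γ φ x := by
  rw [Pavg, Pavg, Orb_eq_of_mem Γ h]

lemma sum_orbit_Pavg (x₀ : Fin d → ZMod p) (φ : (Fin d → ZMod p) → ℝ) :
    ∑ y ∈ Orb Γ x₀, Pavg Γ φ y = ∑ y ∈ Orb Γ x₀, φ y := by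
  have h1 : ∀ y ∈ Orb Γ x₀, Pavg Γ φ y = Pavg Γ φ x₀ := fun y hy => Pavg_eq_of_mem Γ φ hy
  rw [Finset.sum_congr rfl h1, Finset.sum_const, nsmul_eq_mul, Pavg]
  have hc : ((Orb Γ x₀).card : ℝ) ≠ 0 := by
    exact_mod_cast Nat.pos_iff_ne_zero.mp (Orb_card_pos Γ x₀)
  field_simp


lemma Top_Pavg (hμ1 : ∑ w : ↥Γ, μ₀ w = 1) (φ : (Fin d → ZMod p) → ℝ) (x : Fin d → ZMod p) :
    Kop Γ μ₀ (Pavg Γ φ) x = Pavg Γ φ x := by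
  rw [Kop]
  have h1 : ∀ w : ↥Γ, w ∈ Finset.univ →
      μ₀ w * Pavg Γ φ (act Γ w⁻¹ x) = μ₀ w * Pavg Γ φ x := fun w _ => by
    rw [Pavg_eq_of_mem Γ φ (act_mem_Orb Γ w⁻¹ x)]
  rw [Finset.sum_congr rfl h1, ← Finset.sum_mul, hμ1, one_mul]

lemma Top_add (φ ψ : (Fin d → ZMod p) → ℝ) (x : Fin d → ZMod p) :
    Kop Γ μ₀ (fun y => φ y + ψ y) x = Kop Γ μ₀ φ x + Kop Γ μ₀ ψ x := by
  rw [Kop, Kop, Kop, ← Finset.sum_add_distrib]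
  apply Finset.sum_congr rfl; intros; ring

lemma sum_orbit_act_inv (w : ↥Γ) (x₀ : Fin d → ZMod p) (ψ : (Fin d → ZMod p) → ℝ) :
    ∑ y ∈ Orb Γ x₀, ψ (act Γ w⁻¹ y) = ∑ y ∈ Orb Γ x₀, ψ y := by
  apply Finset.sum_nbij' (i := fun y => act Γ w⁻¹ y) (j := fun y => act Γ w y)
  · intro y hy
    rw [← Orb_eq_of_mem Γ hy]
    exact act_mem_Orb Γ w⁻¹ y
  · intro y hy
    rw [← Orb_eq_of_mem Γ hy]
    exact act_mem_Orb Γ w y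
  · intro y _
    rw [← act_mul, mul_inv_cancel, act_one]
  · intro y _
    rw [← act_mul, inv_mul_cancel, act_one]
  · intro y _
    rfl

lemma sum_orbit_Top (hμ1 : ∑ w : ↥Γ, μ₀ w = 1) (x₀ : Fin d → ZMod p)
    (ψ : (Fin d → ZMod p) → ℝ) :
    ∑ y ∈ Orb Γ x₀, Kop Γ μ₀ ψ y = ∑ y ∈ Orb Γ x₀, ψ y := by
  calc ∑ y ∈ Orb Γ x₀, Kop Γ μ₀ ψ y
      = ∑ w : ↥Γ, ∑ y ∈ Orb Γ x₀, μ₀ w * ψ (act Γ w⁻¹ y) := Finset.sum_comm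
    _ = ∑ w : ↥Γ, μ₀ w * ∑ y ∈ Orb Γ x₀, ψ y := by
        apply Finset.sum_congr rfl; intro w _
        rw [← Finset.mul_sum, sum_orbit_act_inv Γ w x₀ ψ]
    _ = ∑ y ∈ Orb Γ x₀, ψ y := by rw [← Finset.sum_mul, hμ1, one_mul]

lemma transfer (c : ℝ) (hL : lregGap Γ μ₀ c) (x₀ : Fin d → ZMod p)
    (φ : (Fin d → ZMod p) → ℝ) (hmean : ∑ y ∈ Orb Γ x₀, φ y = 0) :
    ∑ y ∈ Orb Γ x₀, (Kop Γ μ₀ φ y) ^ 2 ≤ c ^ 2 * ∑ y ∈ Orb Γ x₀, (φ y) ^ 2 := by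
  set φt : ↥Γ → ℂ := fun g => ((φ (act Γ g x₀) : ℝ) : ℂ) with hφt
  have hsum : ∑ g : ↥Γ, φt g = 0 := by
    have h0 : ∑ g : ↥Γ, φ (act Γ g x₀) = 0 := by
      rw [sum_gamma Γ x₀ φ, hmean, mul_zero]
    rw [hφt, ← Complex.ofReal_sum, h0, Complex.ofReal_zero]
  have key := hL φt hsum
  have hid : (fun z : ↥Γ => ∑ w : ↥Γ, (μ₀ w : ℂ) * φt (w⁻¹ * z))
      = fun z : ↥Γ => ((Kop Γ μ₀ φ (act Γ z x₀) : ℝ) : ℂ) := by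
    funext z
    rw [Kop, Complex.ofReal_sum]
    apply Finset.sum_congr rfl; intro w _
    rw [hφt]
    simp only
    rw [act_mul, Complex.ofReal_mul]
  rw [hid] at key
  have l2sq : ∀ u : (Fin d → ZMod p) → ℝ,
      (l2C (fun z : ↥Γ => ((u (act Γ z x₀) : ℝ) : ℂ))) ^ 2
        = (stabN Γ x₀ : ℝ) * ∑ y ∈ Orb Γ x₀, u y ^ 2 := by
    intro u
    rw [l2C, Real.sq_sqrt]
    · have hterm : ∀ z : ↥Γ, ‖((u (act Γ z x₀) : ℝ) : ℂ)‖ ^ 2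
          = (fun y => u y ^ 2) (act Γ z x₀) := by
        intro z; rw [Complex.norm_real, Real.norm_eq_abs, _root_.sq_abs]
      calc ∑ z : ↥Γ, ‖((u (act Γ z x₀) : ℝ) : ℂ)‖ ^ 2
          = ∑ z : ↥Γ, (fun y => u y ^ 2) (act Γ z x₀) :=
            Finset.sum_congr rfl (fun z _ => hterm z)
        _ = (stabN Γ x₀ : ℝ) * ∑ y ∈ Orb Γ x₀, u y ^ 2 := sum_gamma Γ x₀ (fun y => u y ^ 2)
    · positivity
  have hA : (0:ℝ) ≤ l2C (fun z : ↥Γ => ((Kop Γ μ₀ φ (act Γ z x₀) : ℝ) : ℂ)) :=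
    Real.sqrt_nonneg _
  have hsq := mul_self_le_mul_self hA key
  rw [← pow_two, ← pow_two, mul_pow] at hsq
  rw [l2sq (Kop Γ μ₀ φ)] at hsq
  have hr : (l2C φt) ^ 2 = (stabN Γ x₀ : ℝ) * ∑ y ∈ Orb Γ x₀, φ y ^ 2 := l2sq φ
  rw [hr] at hsq
  have hM : (0:ℝ) < (stabN Γ x₀ : ℝ) := by exact_mod_cast stabN_pos Γ x₀
  have := hsq
  rw [show c ^ 2 * ((stabN Γ x₀ : ℝ) * ∑ y ∈ Orb Γ x₀, φ y ^ 2)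
      = (stabN Γ x₀ : ℝ) * (c ^ 2 * ∑ y ∈ Orb Γ x₀, φ y ^ 2) by ring] at this
  exact le_of_mul_le_mul_left this hM


lemma cross_zero (h ψ : (Fin d → ZMod p) → ℝ)
    (hψ : ∀ x₀, ∑ y ∈ Orb Γ x₀, ψ y = 0) :
    ∑ x, Pavg Γ h x * ψ x = 0 := by
  rw [← sum_orbs Γ (fun x => Pavg Γ h x * ψ x)]
  apply Finset.sum_eq_zero
  intro O hO
  obtain ⟨x₀, -, rfl⟩ := Finset.mem_image.mp hO
  have hconst : ∀ y ∈ Orb Γ x₀, Pavg Γ h y * ψ y = Pavg Γ h x₀ * ψ y := fun y hy => by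
    rw [Pavg_eq_of_mem Γ h hy]
  rw [Finset.sum_congr rfl hconst, ← Finset.mul_sum, hψ x₀, mul_zero]

lemma resid_orbit_zero (h : (Fin d → ZMod p) → ℝ) (x₀ : Fin d → ZMod p) :
    ∑ y ∈ Orb Γ x₀, (h y - Pavg Γ h y) = 0 := by
  rw [Finset.sum_sub_distrib, sum_orbit_Pavg, sub_self]

lemma Pavg_sq_bound (h : (Fin d → ZMod p) → ℝ) (hnn : ∀ x, 0 ≤ h x) (h1 : ∑ x, h x = 1)
    (hbig : ∀ x : Fin d → ZMod p, x ≠ 0 → (p : ℝ) ≤ (Orb Γ x).card) :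
    ∑ x, (Pavg Γ h x) ^ 2 ≤ (h 0) ^ 2 + 1 / p := by
  have hp0 : (0:ℝ) < p := by
    exact_mod_cast Nat.pos_of_ne_zero (NeZero.ne p)
  set F : Finset (Fin d → ZMod p) → ℝ := fun O => (∑ y ∈ O, h y) ^ 2 / O.card with hF
  have horbsum : ∀ x₀ : Fin d → ZMod p, ∑ y ∈ Orb Γ x₀, (Pavg Γ h y) ^ 2 = F (Orb Γ x₀) := by
    intro x₀
    have hconst : ∀ y ∈ Orb Γ x₀, (Pavg Γ h y) ^ 2 = (Pavg Γ h x₀) ^ 2 := fun y hy => by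
      rw [Pavg_eq_of_mem Γ h hy]
    rw [Finset.sum_congr rfl hconst, Finset.sum_const, nsmul_eq_mul, hF, Pavg]
    have hc : ((Orb Γ x₀).card : ℝ) ≠ 0 := by
      exact_mod_cast Nat.pos_iff_ne_zero.mp (Orb_card_pos Γ x₀)
    field_simp
  have hmain : ∑ x, (Pavg Γ h x) ^ 2 = ∑ O ∈ orbs Γ, F O := by
    rw [← sum_orbs Γ (fun x => (Pavg Γ h x) ^ 2)]
    apply Finset.sum_congr rfl
    intro O hO
    obtain ⟨x₀, -, rfl⟩ := Finset.mem_image.mp hO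
    exact horbsum x₀
  set O0 : Finset (Fin d → ZMod p) := Orb Γ 0 with hO0
  have hO0mem : O0 ∈ orbs Γ := Finset.mem_image_of_mem _ (Finset.mem_univ 0)
  have hsplit : F O0 + ∑ O ∈ (orbs Γ).erase O0, F O = ∑ O ∈ orbs Γ, F O :=
    Finset.add_sum_erase _ F hO0mem
  have hFO0 : F O0 = (h 0) ^ 2 := by
    rw [hF, hO0, Orb_zero]
    simp
  have hSOnn : ∀ O ∈ (orbs Γ).erase O0, 0 ≤ ∑ y ∈ O, h y := fun O _ =>
    Finset.sum_nonneg (fun y _ => hnn y)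
  have htot : ∑ O ∈ orbs Γ, (∑ y ∈ O, h y) = 1 := by rw [sum_orbs Γ h, h1]
  have herased : ∑ O ∈ (orbs Γ).erase O0, (∑ y ∈ O, h y) = 1 - h 0 := by
    have hth := Finset.add_sum_erase _ (fun O => ∑ y ∈ O, h y) hO0mem
    rw [htot] at hth
    have hO0sum : ∑ y ∈ O0, h y = h 0 := by rw [hO0, Orb_zero]; simp
    rw [hO0sum] at hth
    linarith
  have hbound : ∑ O ∈ (orbs Γ).erase O0, F O ≤ 1 / p := by
    have step1 : ∑ O ∈ (orbs Γ).erase O0, F O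
        ≤ ∑ O ∈ (orbs Γ).erase O0, (∑ y ∈ O, h y) ^ 2 / p := by
      apply Finset.sum_le_sum
      intro O hO
      obtain ⟨x₀, -, rfl⟩ := Finset.mem_image.mp (Finset.mem_of_mem_erase hO)
      have hx₀ : x₀ ≠ 0 := by
        intro hx
        apply Finset.ne_of_mem_erase hO
        rw [hx, hO0]
      have hcard : (p : ℝ) ≤ ((Orb Γ x₀).card : ℝ) := hbig x₀ hx₀
      rw [hF]
      exact div_le_div_of_nonneg_left (sq_nonneg _) hp0 hcard
    have step2 : ∑ O ∈ (orbs Γ).erase O0, (∑ y ∈ O, h y) ^ 2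
        ≤ (∑ O ∈ (orbs Γ).erase O0, (∑ y ∈ O, h y)) ^ 2 :=
      Finset.sum_sq_le_sq_sum_of_nonneg hSOnn
    have step3 : (∑ O ∈ (orbs Γ).erase O0, (∑ y ∈ O, h y)) ^ 2 ≤ 1 := by
      rw [herased]
      have h0nn : 0 ≤ h 0 := hnn 0
      have h0le : h 0 ≤ 1 := by
        rw [← h1]
        exact Finset.single_le_sum (fun x _ => hnn x) (Finset.mem_univ 0)
      nlinarith
    calc ∑ O ∈ (orbs Γ).erase O0, F O
        ≤ ∑ O ∈ (orbs Γ).erase O0, (∑ y ∈ O, h y) ^ 2 / p := step1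
      _ = (∑ O ∈ (orbs Γ).erase O0, (∑ y ∈ O, h y) ^ 2) / p := by
          rw [Finset.sum_div]
      _ ≤ 1 / p := by
          have := (div_le_div_iff_of_pos_right hp0).mpr (step2.trans step3)
          exact this
  linarith [hsplit, hmain.le, hFO0]

end OpPart


section Energy

open Finset

variable {p d : ℕ} [NeZero p]

lemma corr_nonneg (η : (Fin d → ZMod p) → ℝ) (hnn : ∀ x, 0 ≤ η x) (z : Fin d → ZMod p) :
    0 ≤ corr η z :=
  Finset.sum_nonneg fun y _ => mul_nonneg (hnn _) (hnn _)

lemma corr_zero_eq (η : (Fin d → ZMod p) → ℝ) : corr η 0 = ∑ y, η y ^ 2 := by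
  rw [corr]
  apply Finset.sum_congr rfl
  intro y _
  rw [zero_add, pow_two]

lemma sum_corr (η : (Fin d → ZMod p) → ℝ) : ∑ z, corr η z = (∑ y, η y) ^ 2 := by
  calc ∑ z, corr η z = ∑ z, ∑ y, η (z + y) * η y := rfl
    _ = ∑ y, ∑ z, η (z + y) * η y := Finset.sum_comm
    _ = ∑ y, ∑ u, η u * η y := by
        apply Finset.sum_congr rfl; intro y _
        exact Fintype.sum_equiv (Equiv.addRight y) _ _ (fun z => rfl)
    _ = (∑ y, η y) ^ 2 := by
        rw [pow_two, Finset.sum_mul_sum, Finset.sum_comm]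

lemma corr_lower (η : (Fin d → ZMod p) → ℝ) (hnn : ∀ x, 0 ≤ η x) (x y : Fin d → ZMod p) :
    η x * η y ≤ corr η (x - y) := by
  have h := Finset.single_le_sum (f := fun v => η (x - y + v) * η v)
    (fun v _ => mul_nonneg (hnn _) (hnn _)) (Finset.mem_univ y)
  simp only [sub_add_cancel] at h
  exact h

lemma energy_lower (η : (Fin d → ZMod p) → ℝ) (hnn : ∀ x, 0 ≤ η x) :
    2 * (∑ y, η y ^ 2) ^ 2 - ∑ y, η y ^ 4 ≤ ∑ z, corr η z ^ 2 := by
  set S2 : ℝ := ∑ y, η y ^ 2 with hS2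
  set w : (Fin d → ZMod p) → (Fin d → ZMod p) → ℝ :=
    fun x y => η x ^ 2 * η y ^ 2 + (if x = y then (S2 - η y ^ 2) * η y ^ 2 else 0) with hw
  have hident : ∑ z, corr η z ^ 2 = ∑ y, ∑ x, corr η (x - y) * (η x * η y) := by
    calc ∑ z, corr η z ^ 2 = ∑ z, ∑ y, corr η z * (η (z + y) * η y) := by
          apply Finset.sum_congr rfl; intro z _
          rw [← Finset.mul_sum, ← corr, pow_two]
      _ = ∑ y, ∑ z, corr η z * (η (z + y) * η y) := Finset.sum_comm
      _ = ∑ y, ∑ x, corr η (x - y) * (η x * η y) := by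
          apply Finset.sum_congr rfl; intro y _
          exact Fintype.sum_equiv (Equiv.addRight y) _ _ (fun z => by
            simp only [Equiv.coe_addRight, add_sub_cancel_right])
  have hterm : ∀ y x : Fin d → ZMod p, w x y ≤ corr η (x - y) * (η x * η y) := by
    intro y x
    by_cases hxy : x = y
    · subst hxy
      simp only [hw, eq_self_iff_true, if_true, sub_self, corr_zero_eq, ← hS2]
      exact le_of_eq (by ring)
    · simp only [hw, if_neg hxy, add_zero]
      have h1 : 0 ≤ η x * η y := mul_nonneg (hnn x) (hnn y)
      have h2 := corr_lower η hnn x y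
      nlinarith
  have hsum : ∑ y, ∑ x, w x y = 2 * S2 ^ 2 - ∑ y, η y ^ 4 := by
    have hinner : ∀ y : Fin d → ZMod p, ∑ x, w x y = S2 * η y ^ 2 + (S2 - η y ^ 2) * η y ^ 2 := by
      intro y
      rw [hw]
      simp only
      rw [Finset.sum_add_distrib, ← Finset.sum_mul, ← hS2, Finset.sum_ite_eq' Finset.univ y
        (fun _ => (S2 - η y ^ 2) * η y ^ 2), if_pos (Finset.mem_univ y)]
    rw [Finset.sum_congr rfl (fun y _ => hinner y)]
    have : ∀ y : Fin d → ZMod p, S2 * η y ^ 2 + (S2 - η y ^ 2) * η y ^ 2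
        = 2 * S2 * η y ^ 2 - (η y ^ 2) * (η y ^ 2) := fun y => by ring
    rw [Finset.sum_congr rfl (fun y _ => this y), Finset.sum_sub_distrib, ← Finset.mul_sum,
      ← hS2]
    have h4 : ∀ y : Fin d → ZMod p, (η y ^ 2) * (η y ^ 2) = η y ^ 4 := fun y => by ring
    rw [Finset.sum_congr rfl (fun y _ => h4 y)]
    ring
  calc 2 * S2 ^ 2 - ∑ y, η y ^ 4 = ∑ y, ∑ x, w x y := hsum.symm
    _ ≤ ∑ y, ∑ x, corr η (x - y) * (η x * η y) :=
        Finset.sum_le_sum (fun y _ => Finset.sum_le_sum (fun x _ => hterm y x))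
    _ = ∑ z, corr η z ^ 2 := hident.symm

end Energy


section Physical

open Finset

variable {p d : ℕ} [NeZero p] (Γ : Subgroup (Matrix.SpecialLinearGroup (Fin d) (ZMod p)))
  (μ₀ : ↥Γ → ℝ)

lemma physical_bound (hμ1 : ∑ w : ↥Γ, μ₀ w = 1)
    (hL : lregGap Γ μ₀ (((2:ℝ) ^ (5:ℕ))⁻¹))
    (h : (Fin d → ZMod p) → ℝ) (hnn : ∀ x, 0 ≤ h x) (h1 : ∑ x, h x = 1)
    (hbig : ∀ x : Fin d → ZMod p, x ≠ 0 → (p : ℝ) ≤ (Orb Γ x).card)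
    (hS : (h 0) ^ 2 ≤ (1681/1762) * ∑ x, h x ^ 2)
    (hp : 1 / (p:ℝ) ≤ (1/130321) * ∑ x, h x ^ 2) :
    ∑ x, (Kop Γ μ₀ h x) ^ 2 ≤ (1681/1762 + 1/130321 + 1/1024) * ∑ x, h x ^ 2 := by
  set φ0 : (Fin d → ZMod p) → ℝ := fun x => h x - Pavg Γ h x with hφ0
  have hφ0orbit : ∀ x₀ : Fin d → ZMod p, ∑ y ∈ Orb Γ x₀, φ0 y = 0 := fun x₀ =>
    resid_orbit_zero Γ h x₀
  have hTh : ∀ x, Kop Γ μ₀ h x = Pavg Γ h x + Kop Γ μ₀ φ0 x := by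
    intro x
    have hdecomp : h = fun y => Pavg Γ h y + φ0 y := by
      funext y; rw [hφ0]; ring
    calc Kop Γ μ₀ h x = Kop Γ μ₀ (fun y => Pavg Γ h y + φ0 y) x := by rw [← hdecomp]
      _ = Kop Γ μ₀ (Pavg Γ h) x + Kop Γ μ₀ φ0 x := Top_add Γ μ₀ _ _ x
      _ = Pavg Γ h x + Kop Γ μ₀ φ0 x := by rw [Top_Pavg Γ μ₀ hμ1 h x]
  -- cross term for Kop φ0
  have hTφ0orbit : ∀ x₀ : Fin d → ZMod p, ∑ y ∈ Orb Γ x₀, Kop Γ μ₀ φ0 y = 0 := by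
    intro x₀
    rw [sum_orbit_Top Γ μ₀ hμ1 x₀ φ0, hφ0orbit x₀]
  have hcross1 : ∑ x, Pavg Γ h x * Kop Γ μ₀ φ0 x = 0 := cross_zero Γ h _ hTφ0orbit
  have hcross2 : ∑ x, Pavg Γ h x * φ0 x = 0 := cross_zero Γ h _ hφ0orbit
  -- Pythagoras for h
  have hpyth : ∑ x, h x ^ 2 = ∑ x, (Pavg Γ h x) ^ 2 + ∑ x, φ0 x ^ 2 := by
    have : ∀ x : Fin d → ZMod p, h x ^ 2
        = (Pavg Γ h x) ^ 2 + 2 * (Pavg Γ h x * φ0 x) + φ0 x ^ 2 := by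
      intro x; rw [hφ0]; ring
    rw [Finset.sum_congr rfl (fun x _ => this x), Finset.sum_add_distrib,
      Finset.sum_add_distrib, ← Finset.mul_sum, hcross2]
    ring
  -- expansion of Kop h
  have hexp : ∑ x, (Kop Γ μ₀ h x) ^ 2
      = ∑ x, (Pavg Γ h x) ^ 2 + ∑ x, (Kop Γ μ₀ φ0 x) ^ 2 := by
    have : ∀ x : Fin d → ZMod p, (Kop Γ μ₀ h x) ^ 2
        = (Pavg Γ h x) ^ 2 + 2 * (Pavg Γ h x * Kop Γ μ₀ φ0 x) + (Kop Γ μ₀ φ0 x) ^ 2 := by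
      intro x; rw [hTh x]; ring
    rw [Finset.sum_congr rfl (fun x _ => this x), Finset.sum_add_distrib,
      Finset.sum_add_distrib, ← Finset.mul_sum, hcross1]
    ring
  -- transfer bound
  have htrans : ∑ x, (Kop Γ μ₀ φ0 x) ^ 2 ≤ (((2:ℝ) ^ (5:ℕ))⁻¹) ^ 2 * ∑ x, φ0 x ^ 2 := by
    calc ∑ x, (Kop Γ μ₀ φ0 x) ^ 2
        = ∑ O ∈ orbs Γ, ∑ y ∈ O, (Kop Γ μ₀ φ0 y) ^ 2 :=
          (sum_orbs Γ (fun x => (Kop Γ μ₀ φ0 x) ^ 2)).symm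
      _ ≤ ∑ O ∈ orbs Γ, (((2:ℝ) ^ (5:ℕ))⁻¹) ^ 2 * ∑ y ∈ O, φ0 y ^ 2 := by
          apply Finset.sum_le_sum
          intro O hO
          obtain ⟨x₀, -, rfl⟩ := Finset.mem_image.mp hO
          exact transfer Γ μ₀ _ hL x₀ φ0 (hφ0orbit x₀)
      _ = (((2:ℝ) ^ (5:ℕ))⁻¹) ^ 2 * ∑ O ∈ orbs Γ, ∑ y ∈ O, φ0 y ^ 2 := by
          rw [Finset.mul_sum]
      _ = (((2:ℝ) ^ (5:ℕ))⁻¹) ^ 2 * ∑ x, φ0 x ^ 2 := by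
          rw [sum_orbs Γ (fun x => φ0 x ^ 2)]
  have hPbound : ∑ x, (Pavg Γ h x) ^ 2 ≤ (h 0) ^ 2 + 1 / p :=
    Pavg_sq_bound Γ h hnn h1 hbig
  have hφ0le : ∑ x, φ0 x ^ 2 ≤ ∑ x, h x ^ 2 := by
    have hPnn : 0 ≤ ∑ x, (Pavg Γ h x) ^ 2 := Finset.sum_nonneg fun x _ => sq_nonneg _
    linarith [hpyth]
  have hc2 : (((2:ℝ) ^ (5:ℕ))⁻¹) ^ 2 = 1 / 1024 := by norm_num
  have hφ0nn : 0 ≤ ∑ x, φ0 x ^ 2 := Finset.sum_nonneg fun x _ => sq_nonneg _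
  calc ∑ x, (Kop Γ μ₀ h x) ^ 2
      = ∑ x, (Pavg Γ h x) ^ 2 + ∑ x, (Kop Γ μ₀ φ0 x) ^ 2 := hexp
    _ ≤ ((h 0) ^ 2 + 1 / p) + (1/1024) * ∑ x, φ0 x ^ 2 := by
        rw [← hc2]; exact add_le_add hPbound htrans
    _ ≤ ((1681/1762) * ∑ x, h x ^ 2 + (1/130321) * ∑ x, h x ^ 2)
          + (1/1024) * ∑ x, h x ^ 2 := by
        have := mul_le_mul_of_nonneg_left hφ0le (by norm_num : (0:ℝ) ≤ 1/1024)
        have h2 := add_le_add hS hp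
        linarith
    _ = (1681/1762 + 1/130321 + 1/1024) * ∑ x, h x ^ 2 := by ring

end Physical

end L4Aux

section MergedProof
open L4Aux Finset

/-- **Lemma (`L̂⁴` decay, after Lindenstrauss–Varjú).** -/
theorem l4_decay
    {p d : ℕ} [NeZero p] (hp : p.Prime)
    (Γ : Subgroup (Matrix.SpecialLinearGroup (Fin d) (ZMod p)))
    (μ₀ : ↥Γ → ℝ) (hμnn : ∀ g, 0 ≤ μ₀ g) (hμ1 : ∑ g : ↥Γ, μ₀ g = 1)
    (η : (Fin d → ZMod p) → ℝ) (hηnn : ∀ x, 0 ≤ η x) (hη1 : ∑ x, η x = 1)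
    (horb : ∀ x : Fin d → ZMod p,
      (orbitSet (Γ : Set (Matrix.SpecialLinearGroup (Fin d) (ZMod p))) x).ncard < p → x = 0)
    (hL : lregGap Γ μ₀ (((2:ℝ) ^ (5:ℕ))⁻¹))
    (hmass : ∀ x : Fin d → ZMod p, η x ≤ (40 / 41) * l2R η)
    (hL4 : 19 * (p : ℝ) ^ (-(1:ℝ)/4) ≤ hatL4 (fun a => ‖fhat η a‖)) :
    hatL4 (fun a => ∑ w : ↥Γ, μ₀ w * ‖fhat η ((w : Matrix.SpecialLinearGroup (Fin d) (ZMod p)).1.transpose.mulVec a)‖) ≤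
      (2:ℝ) ^ (-(2:ℝ) ^ (-(34:ℝ))) * hatL4 (fun a => ‖fhat η a‖) := by
  classical
  have hpR : (0:ℝ) < p := by exact_mod_cast hp.pos
  set ν : (Fin d → ZMod p) → ℝ := fun a => ‖fhat η a‖ with hν
  set h : (Fin d → ZMod p) → ℝ := corr η with hh
  -- bridge between fhat and FC
  have hbridge : ∀ (f : (Fin d → ZMod p) → ℝ) (a : Fin d → ZMod p), fhat f a = FC f a := by
    intro f a
    rw [fhat, FC]
    apply Finset.sum_congr rfl
    intro x _
    rw [ec_eq]
    rfl
  have hnnh : ∀ x, 0 ≤ h x := fun x => corr_nonneg η hηnn x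
  have h1 : ∑ x, h x = 1 := by rw [hh, sum_corr, hη1, one_pow]
  set S2 : ℝ := ∑ y, η y ^ 2 with hS2def
  have hS2nn : 0 ≤ S2 := Finset.sum_nonneg fun y _ => sq_nonneg _
  have h0eq : h 0 = S2 := corr_zero_eq η
  have hνnn : ∀ a, 0 ≤ ν a := fun a => norm_nonneg _
  -- ν² = FC h
  have hnu2 : ∀ a, ((ν a ^ 2 : ℝ) : ℂ) = FC h a := by
    intro a
    rw [hh, FC_corr η a, hν]
    simp only
    rw [hbridge η a]
  have habsFCh : ∀ a, ‖FC h a‖ = ν a ^ 2 := by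
    intro a
    rw [← hnu2 a, Complex.norm_real, Real.norm_eq_abs, _root_.abs_of_nonneg (sq_nonneg _)]
  -- Parseval for ν⁴
  have hX : ∑ a, ν a ^ 4 = ((p^d : ℕ) : ℝ) * ∑ x, h x ^ 2 := by
    calc ∑ a, ν a ^ 4 = ∑ a, ‖FC h a‖ ^ 2 := by
          apply Finset.sum_congr rfl; intro a _
          rw [habsFCh a]; ring
      _ = ((p^d : ℕ) : ℝ) * ∑ x, h x ^ 2 := parseval h
  -- zpow facts
  set r : ℝ := (p : ℝ) ^ (-(d : ℤ)) with hr
  have hrpos : 0 < r := by rw [hr]; positivity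
  have hrpd : r * ((p^d : ℕ) : ℝ) = 1 := by
    rw [hr, _root_.zpow_neg, zpow_natCast]
    push_cast
    rw [inv_mul_cancel₀ (by positivity)]
  have hXS : r * ∑ a, ν a ^ 4 = ∑ x, h x ^ 2 := by
    rw [hX, ← mul_assoc, hrpd, one_mul]
  have hhsqnn : 0 ≤ ∑ x, h x ^ 2 := Finset.sum_nonneg fun x _ => sq_nonneg _
  -- hatL4 ν as rpow of ∑ h²
  have hatν : hatL4 (fun a => ‖fhat η a‖) = (r * ∑ a, ν a ^ 4) ^ ((1:ℝ)/4) := by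
    rw [hatL4]
    congr 1
    rw [← hr]
    congr 1
    apply Finset.sum_congr rfl
    intro a _
    rw [_root_.abs_of_nonneg (hνnn a)]
  -- lower bound on ∑ h² from hL4
  have hp14 : 130321 * (p:ℝ)⁻¹ ≤ ∑ x, h x ^ 2 := by
    have hL4' : 19 * (p : ℝ) ^ (-(1:ℝ)/4) ≤ (∑ x, h x ^ 2) ^ ((1:ℝ)/4) := by
      rw [← hXS]
      rw [hatν] at hL4
      exact hL4
    have hLnn : 0 ≤ 19 * (p : ℝ) ^ (-(1:ℝ)/4) := by positivity
    have hpow := pow_le_pow_left₀ hLnn hL4' 4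
    have hlhs : (19 * (p : ℝ) ^ (-(1:ℝ)/4)) ^ (4:ℕ) = 130321 * (p:ℝ)⁻¹ := by
      rw [mul_pow, ← Real.rpow_natCast ((p:ℝ) ^ (-(1:ℝ)/4)) 4, ← Real.rpow_mul hpR.le]
      norm_num
      rw [Real.rpow_neg_one]
    have hrhs : ((∑ x, h x ^ 2) ^ ((1:ℝ)/4)) ^ (4:ℕ) = ∑ x, h x ^ 2 := by
      rw [← Real.rpow_natCast ((∑ x, h x ^ 2) ^ ((1:ℝ)/4)) 4, ← Real.rpow_mul hhsqnn]
      norm_num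
    rw [hlhs, hrhs] at hpow
    exact hpow
  have hpbound : 1 / (p:ℝ) ≤ (1/130321) * ∑ x, h x ^ 2 := by
    rw [one_div]
    linarith
  -- energy bound
  have hmax4 : ∑ y, η y ^ 4 ≤ (1600/1681) * S2 ^ 2 := by
    have hterm : ∀ x : Fin d → ZMod p, η x ^ 4 ≤ (1600/1681) * S2 * η x ^ 2 := by
      intro x
      have hl2sq : (l2R η) ^ 2 = S2 := by
        rw [l2R, Real.sq_sqrt (Finset.sum_nonneg fun y _ => sq_nonneg _)]
      have hsq : η x ^ 2 ≤ (1600/1681) * S2 := by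
        have := mul_self_le_mul_self (hηnn x) (hmass x)
        rw [← pow_two, ← pow_two] at this
        calc η x ^ 2 ≤ ((40/41) * l2R η) ^ 2 := this
          _ = (1600/1681) * (l2R η) ^ 2 := by ring
          _ = (1600/1681) * S2 := by rw [hl2sq]
      calc η x ^ 4 = η x ^ 2 * η x ^ 2 := by ring
        _ ≤ ((1600/1681) * S2) * η x ^ 2 :=
            mul_le_mul_of_nonneg_right hsq (sq_nonneg _)
        _ = (1600/1681) * S2 * η x ^ 2 := by ring
    calc ∑ y, η y ^ 4 ≤ ∑ y, (1600/1681) * S2 * η y ^ 2 :=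
          Finset.sum_le_sum fun y _ => hterm y
      _ = (1600/1681) * S2 ^ 2 := by rw [← Finset.mul_sum, ← hS2def]; ring
  have hSfinal : (h 0) ^ 2 ≤ (1681/1762) * ∑ x, h x ^ 2 := by
    have hE := energy_lower η hηnn
    rw [← hS2def] at hE
    rw [← hh] at hE
    rw [h0eq]
    nlinarith [hE, hmax4]
  -- orbit size bound
  have hbig : ∀ x : Fin d → ZMod p, x ≠ 0 → (p : ℝ) ≤ ((Orb Γ x).card : ℝ) := by
    intro x hx
    have hset : orbitSet (Γ : Set (Matrix.SpecialLinearGroup (Fin d) (ZMod p))) x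
        = (↑(Orb Γ x) : Set (Fin d → ZMod p)) := by
      ext y
      constructor
      · rintro ⟨γ, hγ, rfl⟩
        exact Finset.mem_coe.mpr ((mem_Orb_iff Γ).mpr ⟨⟨γ, hγ⟩, rfl⟩)
      · intro hy
        obtain ⟨g, rfl⟩ := (mem_Orb_iff Γ).mp (Finset.mem_coe.mp hy)
        exact ⟨(g : Matrix.SpecialLinearGroup (Fin d) (ZMod p)), g.2, rfl⟩
    have hn : ¬ ((orbitSet (Γ : Set (Matrix.SpecialLinearGroup (Fin d) (ZMod p))) x).ncard < p) :=
      fun hlt => hx (horb x hlt)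
    push_neg at hn
    rw [hset, Set.ncard_coe_finset] at hn
    exact_mod_cast hn
  -- physical bound
  have hphys := physical_bound Γ μ₀ hμ1 hL h hnnh h1 hbig hSfinal hpbound
  -- the averaged function H
  set H : (Fin d → ZMod p) → ℝ := Kop Γ μ₀ h with hH
  -- FC H = averaged ν²
  have hRH : ∀ a : Fin d → ZMod p, FC H a
      = ((∑ w : ↥Γ, μ₀ w * ν ((w : Matrix.SpecialLinearGroup (Fin d) (ZMod p)).1.transpose.mulVec a) ^ 2 : ℝ) : ℂ) := by
    intro a
    calc FC H a = ∑ x, ec p (dotp a x) * ((H x : ℝ) : ℂ) := rfl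
      _ = ∑ x, ∑ w : ↥Γ, (μ₀ w : ℂ) * (ec p (dotp a x) * ((h (act Γ w⁻¹ x) : ℝ) : ℂ)) := by
          apply Finset.sum_congr rfl; intro x _
          have hKx : ((H x : ℝ) : ℂ) = ∑ w : ↥Γ, (μ₀ w : ℂ) * ((h (act Γ w⁻¹ x) : ℝ) : ℂ) := by
            rw [hH, Kop, Complex.ofReal_sum]
            apply Finset.sum_congr rfl; intro w _
            push_cast
            ring
          rw [hKx, Finset.mul_sum]
          apply Finset.sum_congr rfl; intro w _
          ring
      _ = ∑ w : ↥Γ, (μ₀ w : ℂ) * ∑ x, ec p (dotp a x) * ((h (act Γ w⁻¹ x) : ℝ) : ℂ) := by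
          rw [Finset.sum_comm]
          apply Finset.sum_congr rfl; intro w _
          rw [Finset.mul_sum]
      _ = ∑ w : ↥Γ, (μ₀ w : ℂ)
            * ((ν ((w : Matrix.SpecialLinearGroup (Fin d) (ZMod p)).1.transpose.mulVec a) ^ 2 : ℝ) : ℂ) := by
          apply Finset.sum_congr rfl; intro w _
          congr 1
          have hact : ∀ x : Fin d → ZMod p, act Γ w⁻¹ x
              = (((w : Matrix.SpecialLinearGroup (Fin d) (ZMod p)))⁻¹).1.mulVec x := by
            intro x
            show ((w⁻¹ : ↥Γ) : Matrix.SpecialLinearGroup (Fin d) (ZMod p)).1.mulVec x = _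
            norm_cast
          calc ∑ x, ec p (dotp a x) * ((h (act Γ w⁻¹ x) : ℝ) : ℂ)
              = FC (fun x => h ((((w : Matrix.SpecialLinearGroup (Fin d) (ZMod p)))⁻¹).1.mulVec x)) a := by
                rw [FC]
                apply Finset.sum_congr rfl; intro x _
                rw [hact x]
            _ = FC h ((w : Matrix.SpecialLinearGroup (Fin d) (ZMod p)).1.transpose.mulVec a) :=
                (FC_transpose _ h a).symm
            _ = _ := (hnu2 _).symm
      _ = ((∑ w : ↥Γ, μ₀ w * ν ((w : Matrix.SpecialLinearGroup (Fin d) (ZMod p)).1.transpose.mulVec a) ^ 2 : ℝ) : ℂ) := by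
          rw [Complex.ofReal_sum]
          apply Finset.sum_congr rfl; intro w _
          push_cast
          ring
  -- abs of FC H
  have hRnn : ∀ a : Fin d → ZMod p,
      0 ≤ ∑ w : ↥Γ, μ₀ w * ν ((w : Matrix.SpecialLinearGroup (Fin d) (ZMod p)).1.transpose.mulVec a) ^ 2 :=
    fun a => Finset.sum_nonneg fun w _ => mul_nonneg (hμnn w) (sq_nonneg _)
  have habsH : ∀ a : Fin d → ZMod p, ‖FC H a‖
      = ∑ w : ↥Γ, μ₀ w * ν ((w : Matrix.SpecialLinearGroup (Fin d) (ZMod p)).1.transpose.mulVec a) ^ 2 := by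
    intro a
    rw [hRH a, Complex.norm_real, Real.norm_eq_abs, _root_.abs_of_nonneg (hRnn a)]
  -- Parseval for H
  have hHpars : ∑ a, (∑ w : ↥Γ, μ₀ w * ν ((w : Matrix.SpecialLinearGroup (Fin d) (ZMod p)).1.transpose.mulVec a) ^ 2) ^ 2
      = ((p^d : ℕ) : ℝ) * ∑ x, H x ^ 2 := by
    calc ∑ a, (∑ w : ↥Γ, μ₀ w * ν ((w : Matrix.SpecialLinearGroup (Fin d) (ZMod p)).1.transpose.mulVec a) ^ 2) ^ 2
        = ∑ a, ‖FC H a‖ ^ 2 := by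
          apply Finset.sum_congr rfl; intro a _
          rw [habsH a]
      _ = ((p^d : ℕ) : ℝ) * ∑ x, H x ^ 2 := parseval H
  -- Cauchy–Schwarz pointwise
  have hGnn : ∀ a : Fin d → ZMod p,
      0 ≤ ∑ w : ↥Γ, μ₀ w * ν ((w : Matrix.SpecialLinearGroup (Fin d) (ZMod p)).1.transpose.mulVec a) :=
    fun a => Finset.sum_nonneg fun w _ => mul_nonneg (hμnn w) (hνnn _)
  have hGR : ∀ a : Fin d → ZMod p,
      (∑ w : ↥Γ, μ₀ w * ν ((w : Matrix.SpecialLinearGroup (Fin d) (ZMod p)).1.transpose.mulVec a)) ^ 2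
        ≤ ∑ w : ↥Γ, μ₀ w * ν ((w : Matrix.SpecialLinearGroup (Fin d) (ZMod p)).1.transpose.mulVec a) ^ 2 := by
    intro a
    have hcs := Finset.sum_mul_sq_le_sq_mul_sq Finset.univ (fun w : ↥Γ => Real.sqrt (μ₀ w))
      (fun w : ↥Γ => Real.sqrt (μ₀ w) * ν ((w : Matrix.SpecialLinearGroup (Fin d) (ZMod p)).1.transpose.mulVec a))
    have e1 : ∀ w : ↥Γ, Real.sqrt (μ₀ w) * (Real.sqrt (μ₀ w) * ν ((w : Matrix.SpecialLinearGroup (Fin d) (ZMod p)).1.transpose.mulVec a))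
        = μ₀ w * ν ((w : Matrix.SpecialLinearGroup (Fin d) (ZMod p)).1.transpose.mulVec a) := by
      intro w
      rw [← mul_assoc, Real.mul_self_sqrt (hμnn w)]
    have e2 : ∀ w : ↥Γ, (Real.sqrt (μ₀ w)) ^ 2 = μ₀ w := fun w => Real.sq_sqrt (hμnn w)
    have e3 : ∀ w : ↥Γ, (Real.sqrt (μ₀ w) * ν ((w : Matrix.SpecialLinearGroup (Fin d) (ZMod p)).1.transpose.mulVec a)) ^ 2
        = μ₀ w * ν ((w : Matrix.SpecialLinearGroup (Fin d) (ZMod p)).1.transpose.mulVec a) ^ 2 := by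
      intro w
      rw [mul_pow, Real.sq_sqrt (hμnn w)]
    rw [Finset.sum_congr rfl (fun w _ => e1 w), Finset.sum_congr rfl (fun w _ => e2 w),
      Finset.sum_congr rfl (fun w _ => e3 w), hμ1, one_mul] at hcs
    exact hcs
  -- fourth power bound
  have hG4 : ∑ a, (∑ w : ↥Γ, μ₀ w * ν ((w : Matrix.SpecialLinearGroup (Fin d) (ZMod p)).1.transpose.mulVec a)) ^ 4
      ≤ ((p^d : ℕ) : ℝ) * ∑ x, H x ^ 2 := by
    rw [← hHpars]
    apply Finset.sum_le_sum
    intro a _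
    have h1' := hGR a
    have h2' := sq_nonneg (∑ w : ↥Γ, μ₀ w * ν ((w : Matrix.SpecialLinearGroup (Fin d) (ZMod p)).1.transpose.mulVec a))
    calc (∑ w : ↥Γ, μ₀ w * ν ((w : Matrix.SpecialLinearGroup (Fin d) (ZMod p)).1.transpose.mulVec a)) ^ 4
        = ((∑ w : ↥Γ, μ₀ w * ν ((w : Matrix.SpecialLinearGroup (Fin d) (ZMod p)).1.transpose.mulVec a)) ^ 2) ^ 2 := by ring
      _ ≤ (∑ w : ↥Γ, μ₀ w * ν ((w : Matrix.SpecialLinearGroup (Fin d) (ZMod p)).1.transpose.mulVec a) ^ 2) ^ 2 :=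
          pow_le_pow_left₀ h2' h1' 2
  -- main fourth-moment inequality
  set B : ℝ := 1681/1762 + 1/130321 + 1/1024 with hB
  have hmain4 : r * ∑ a, (∑ w : ↥Γ, μ₀ w * ν ((w : Matrix.SpecialLinearGroup (Fin d) (ZMod p)).1.transpose.mulVec a)) ^ 4
      ≤ B * (r * ∑ a, ν a ^ 4) := by
    rw [hXS]
    calc r * ∑ a, (∑ w : ↥Γ, μ₀ w * ν ((w : Matrix.SpecialLinearGroup (Fin d) (ZMod p)).1.transpose.mulVec a)) ^ 4
        ≤ r * (((p^d : ℕ) : ℝ) * ∑ x, H x ^ 2) := mul_le_mul_of_nonneg_left hG4 hrpos.le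
      _ = ∑ x, H x ^ 2 := by rw [← mul_assoc, hrpd, one_mul]
      _ ≤ B * ∑ x, h x ^ 2 := hphys
  -- numeric bound on B
  set t : ℝ := (2:ℝ) ^ (-(2:ℝ) ^ (-(34:ℝ))) with ht
  have ht0 : 0 < t := by rw [ht]; positivity
  have hB4 : B ≤ t ^ (4:ℕ) := by
    have ht4 : t ^ (4:ℕ) = (2:ℝ) ^ (-(2:ℝ) ^ (-(32:ℝ))) := by
      rw [ht, ← Real.rpow_natCast ((2:ℝ) ^ (-(2:ℝ) ^ (-(34:ℝ)))) 4,
        ← Real.rpow_mul (by norm_num : (0:ℝ) ≤ 2)]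
      congr 1
      have h34 : (2:ℝ) ^ (-(34:ℝ)) = ((2:ℝ) ^ (34:ℕ))⁻¹ := by
        rw [Real.rpow_neg (by norm_num : (0:ℝ) ≤ 2)]
        norm_num [Real.rpow_natCast]
      have h32 : (2:ℝ) ^ (-(32:ℝ)) = ((2:ℝ) ^ (32:ℕ))⁻¹ := by
        rw [Real.rpow_neg (by norm_num : (0:ℝ) ≤ 2)]
        norm_num [Real.rpow_natCast]
      rw [h34, h32]
      norm_num
    rw [ht4]
    set x : ℝ := (2:ℝ) ^ (-(32:ℝ)) with hx
    have hxval : x = ((2:ℝ) ^ (32:ℕ))⁻¹ := by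
      rw [hx, Real.rpow_neg (by norm_num : (0:ℝ) ≤ 2)]
      norm_num [Real.rpow_natCast]
    have hx0 : 0 < x := by rw [hxval]; positivity
    have hexp : (2:ℝ) ^ (-x) = Real.exp (Real.log 2 * (-x)) :=
      Real.rpow_def_of_pos (by norm_num) _
    have hle : 1 + Real.log 2 * (-x) ≤ Real.exp (Real.log 2 * (-x)) := by
      have := Real.add_one_le_exp (Real.log 2 * (-x))
      linarith
    have hlog2 : Real.log 2 < 1 := by
      have := Real.log_two_lt_d9
      linarith
    have hlog2pos : 0 < Real.log 2 := Real.log_pos (by norm_num)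
    have hxsmall : x ≤ 1/4294967296 := by rw [hxval]; norm_num
    have hBnum : B ≤ 1 - x := by
      rw [hB]
      linarith [hxsmall]
    calc B ≤ 1 - x := hBnum
      _ ≤ 1 + Real.log 2 * (-x) := by nlinarith
      _ ≤ Real.exp (Real.log 2 * (-x)) := hle
      _ = (2:ℝ) ^ (-x) := hexp.symm
  have hB0 : (0:ℝ) ≤ B := by rw [hB]; norm_num
  have hB14 : B ^ ((1:ℝ)/4) ≤ t := by
    have hmono := Real.rpow_le_rpow hB0 hB4 (by norm_num : (0:ℝ) ≤ 1/4)
    have hts : (t ^ (4:ℕ)) ^ ((1:ℝ)/4) = t := by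
      rw [← Real.rpow_natCast t 4, ← Real.rpow_mul ht0.le]
      rw [show ((4:ℕ):ℝ) * (1/4) = 1 by norm_num, Real.rpow_one]
    rw [hts] at hmono
    exact hmono
  -- final assembly
  have hXnn : 0 ≤ r * ∑ a, ν a ^ 4 :=
    mul_nonneg hrpos.le (Finset.sum_nonneg fun a _ => by positivity)
  have hLHS : hatL4 (fun a => ∑ w : ↥Γ, μ₀ w * ‖fhat η ((w : Matrix.SpecialLinearGroup (Fin d) (ZMod p)).1.transpose.mulVec a)‖)
      = (r * ∑ a, (∑ w : ↥Γ, μ₀ w * ν ((w : Matrix.SpecialLinearGroup (Fin d) (ZMod p)).1.transpose.mulVec a)) ^ 4) ^ ((1:ℝ)/4) := by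
    rw [hatL4, ← hr]
    congr 2
    apply Finset.sum_congr rfl
    intro a _
    rw [_root_.abs_of_nonneg (hGnn a)]
  rw [hLHS, hatν]
  calc (r * ∑ a, (∑ w : ↥Γ, μ₀ w * ν ((w : Matrix.SpecialLinearGroup (Fin d) (ZMod p)).1.transpose.mulVec a)) ^ 4) ^ ((1:ℝ)/4)
      ≤ (B * (r * ∑ a, ν a ^ 4)) ^ ((1:ℝ)/4) := by
        apply Real.rpow_le_rpow ?_ hmain4 (by norm_num)
        exact mul_nonneg hrpos.le (Finset.sum_nonneg fun a _ => by positivity)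
    _ = B ^ ((1:ℝ)/4) * (r * ∑ a, ν a ^ 4) ^ ((1:ℝ)/4) := Real.mul_rpow hB0 hXnn
    _ ≤ t * (r * ∑ a, ν a ^ 4) ^ ((1:ℝ)/4) :=
        mul_le_mul_of_nonneg_right hB14 (Real.rpow_nonneg hXnn _)

end MergedProof
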